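/- If the trigonometric polynomial p(θ) = p₀ + Σ_{k=1}^n 2p_k cos(kθ) is strictly positive for all θ, then there exists m₀ such that for all m ≥ m₀ the weighted Toeplitz matrix P_m is positive definite. -/

import Mathlib

open Matrix Real Finset

/-- The trigonometric polynomial `p(θ) = p₀ + Σ_{k=1}^n 2 p_k cos(kθ)`. -/
noncomputable def trigPoly (n : ℕ) (p : ℕ → ℝ) (θ : ℝ) : ℝ :=
  p 0 + ∑ k ∈ Finset.Icc 1 n, 2 * p k * Real.cos (k * θ)

/-- The `m × m` weighted symmetric banded Toeplitz matrix with `(j,k)` entry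
`(m/(m-|j-k|)) p_{|j-k|}` for `|j-k| ≤ n`, else `0`. -/
noncomputable def Pmat (n m : ℕ) (p : ℕ → ℝ) : Matrix (Fin m) (Fin m) ℝ :=
  fun j k =>
    if ((j : ℤ) - (k : ℤ)).natAbs ≤ n then
      ((m : ℝ) / ((m : ℝ) - (((j : ℤ) - (k : ℤ)).natAbs : ℝ))) * p ((( j : ℤ) - (k : ℤ)).natAbs)
    else 0


noncomputable def Ee (N : ℕ) (t : ℤ) : ℂ := Complex.exp (2 * Real.pi * Complex.I * t / N)

lemma Ee_add (N : ℕ) (s t : ℤ) : Ee N (s + t) = Ee N s * Ee N t := by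
  rw [Ee, Ee, Ee, ← Complex.exp_add]
  congr 1
  push_cast
  ring

lemma Ee_pow (N : ℕ) (d : ℤ) (l : ℕ) : Ee N (d * l) = (Ee N d) ^ l := by
  rw [Ee, Ee, ← Complex.exp_nat_mul]
  congr 1
  push_cast
  ring

lemma conj_Ee (N : ℕ) (t : ℤ) : (starRingEnd ℂ) (Ee N t) = Ee N (-t) := by
  rw [Ee, Ee, ← Complex.exp_conj]
  congr 1
  simp only [map_div₀, _root_.map_mul, Complex.conj_I, map_ofNat, Complex.conj_ofReal,
    map_intCast, map_natCast]
  push_cast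
  ring

lemma sum_Ee (N : ℕ) (d : ℤ) (hd : d.natAbs < N) :
    ∑ l ∈ Finset.range N, Ee N (d * l) = if d = 0 then (N : ℂ) else 0 := by
  rcases eq_or_ne d 0 with rfl | hd0
  · simp [Ee]
  · have hN : (0:ℝ) < N := by
      have : 0 < N := lt_of_le_of_lt (Nat.zero_le _) hd
      exact_mod_cast this
    have hN0 : (N:ℂ) ≠ 0 := by exact_mod_cast hN.ne'
    simp only [Ee_pow, hd0, if_neg]
    have hζ1 : Ee N d ≠ 1 := by
      rw [Ee]
      simp only [ne_eq, Complex.exp_eq_one_iff, not_exists]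
      intro k hk
      exfalso
      have h2 : (2 * Real.pi * Complex.I : ℂ) ≠ 0 := by
        simp [Real.pi_ne_zero, Complex.I_ne_zero]
      have : (d : ℂ) = k * N := by
        field_simp [hN0] at hk
        apply mul_left_cancel₀ h2
        linear_combination (2 * Real.pi * Complex.I : ℂ) * hk
      have hdk : (d : ℤ) = k * N := by exact_mod_cast this
      have hdvd : (N:ℤ) ∣ |d| := (dvd_abs _ _).mpr ⟨k, by linarith [hdk]⟩
      have hle : (N:ℤ) ≤ |d| := Int.le_of_dvd (abs_pos.mpr hd0) hdvd
      have : |d| = (d.natAbs : ℤ) := (Int.abs_eq_natAbs d)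
      omega
    rw [geom_sum_eq hζ1]
    have : Ee N d ^ N = 1 := by
      rw [← Ee_pow, Ee]
      have : ((d * N : ℤ) : ℂ) / N = (d : ℂ) := by
        push_cast
        rw [mul_div_assoc, div_self hN0, mul_one]
      rw [mul_div_assoc, this]
      have := Complex.exp_int_mul_two_pi_mul_I d
      rw [← this]
      congr 1
      ring
    rw [this]
    simp

lemma complex_cos_def (z : ℂ) :
    Complex.cos z = (Complex.exp (z*Complex.I) + Complex.exp (-z*Complex.I))/2 := rfl

lemma cos_eq_Ee (N : ℕ) (k l : ℕ) :
    ((Real.cos (k * (2*Real.pi*l/N)) : ℝ) : ℂ) = (Ee N (k*l) + Ee N (-(k*l)))/2 := by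
  rw [Complex.ofReal_cos, complex_cos_def, Ee, Ee]
  congr 2 <;> push_cast <;> ring

noncomputable def trigPoly' (n : ℕ) (p : ℕ → ℝ) (θ : ℝ) : ℝ :=
  p 0 + ∑ k ∈ Finset.Icc 1 n, 2 * p k * Real.cos (k * θ)

lemma sum_p_Ee (N n : ℕ) (p : ℕ → ℝ) (d : ℤ) (hd : d.natAbs + n < N) :
    ∑ l ∈ Finset.range N, (trigPoly' n p (2*Real.pi*l/N) : ℂ) * Ee N (d*l)
      = N * (if d.natAbs ≤ n then (p d.natAbs : ℂ) else 0) := by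
  have hd0 : d.natAbs < N := by omega
  have step : ∀ l ∈ Finset.range N,
      (trigPoly' n p (2*Real.pi*l/N) : ℂ) * Ee N (d*l)
        = (p 0 : ℂ) * Ee N (d*l)
          + ∑ k ∈ Finset.Icc 1 n, (p k : ℂ) * (Ee N ((k+d)*l) + Ee N ((d-k)*l)) := by
    intro l _
    rw [trigPoly']
    push_cast
    rw [add_mul, Finset.sum_mul]
    congr 1
    apply Finset.sum_congr rfl
    intro k hk
    have hc := cos_eq_Ee N k l
    push_cast at hc
    rw [hc]
    have h1 : ((k:ℤ)+d)*l = (k*l : ℤ) + d*l := by ring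
    have h2 : (d-(k:ℤ))*l = (-((k:ℤ)*l)) + d*l := by ring
    rw [h1, h2, Ee_add, Ee_add]
    ring
  rw [Finset.sum_congr rfl step, Finset.sum_add_distrib, ← Finset.mul_sum,
    sum_Ee N d hd0, Finset.sum_comm]
  have inner : ∀ k ∈ Finset.Icc 1 n,
      ∑ l ∈ Finset.range N, (p k : ℂ) * (Ee N ((k+d)*l) + Ee N ((d-k)*l))
        = (p k : ℂ) * ((if (k:ℤ)+d = 0 then (N:ℂ) else 0) + (if d-(k:ℤ) = 0 then (N:ℂ) else 0)) := by
    intro k hk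
    rw [Finset.mem_Icc] at hk
    rw [← Finset.mul_sum, Finset.sum_add_distrib,
      sum_Ee N _ (by omega), sum_Ee N _ (by omega)]
  rw [Finset.sum_congr rfl inner]
  rcases lt_trichotomy d 0 with hneg | rfl | hpos
  · have h1 : ∀ k ∈ Finset.Icc 1 n,
        (p k : ℂ) * ((if (k:ℤ)+d = 0 then (N:ℂ) else 0) + (if d-(k:ℤ) = 0 then (N:ℂ) else 0))
          = if k = d.natAbs then (p k : ℂ) * N else 0 := by
      intro k hk
      rw [Finset.mem_Icc] at hk
      have : ¬ (d - (k:ℤ) = 0) := by omega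
      rw [if_neg this, add_zero]
      by_cases h : (k:ℤ) + d = 0
      · rw [if_pos h, if_pos (by omega)]
      · rw [if_neg h, if_neg (by omega), mul_zero]
    rw [Finset.sum_congr rfl h1, Finset.sum_ite_eq' (Finset.Icc 1 n) d.natAbs (fun k => (p k : ℂ) * N)]
    rw [if_neg (by omega : ¬ d = 0)]
    by_cases hle : d.natAbs ≤ n
    · rw [if_pos (by rw [Finset.mem_Icc]; omega), if_pos hle]; ring
    · rw [if_neg (by rw [Finset.mem_Icc]; omega), if_neg hle]; ring
  · simp only [Int.natAbs_zero, Nat.zero_le, if_pos, if_true, ite_true]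
    have h1 : ∀ k ∈ Finset.Icc 1 n,
        (p k : ℂ) * ((if (k:ℤ)+0 = 0 then (N:ℂ) else 0) + (if 0-(k:ℤ) = 0 then (N:ℂ) else 0))
          = 0 := by
      intro k hk
      rw [Finset.mem_Icc] at hk
      rw [if_neg (by omega), if_neg (by omega)]
      ring
    rw [Finset.sum_congr rfl h1]
    simp
    ring
  · have h1 : ∀ k ∈ Finset.Icc 1 n,
        (p k : ℂ) * ((if (k:ℤ)+d = 0 then (N:ℂ) else 0) + (if d-(k:ℤ) = 0 then (N:ℂ) else 0))
          = if k = d.natAbs then (p k : ℂ) * N else 0 := by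
      intro k hk
      rw [Finset.mem_Icc] at hk
      have : ¬ ((k:ℤ) + d = 0) := by omega
      rw [if_neg this, zero_add]
      by_cases h : d - (k:ℤ) = 0
      · rw [if_pos h, if_pos (by omega)]
      · rw [if_neg h, if_neg (by omega), mul_zero]
    rw [Finset.sum_congr rfl h1, Finset.sum_ite_eq' (Finset.Icc 1 n) d.natAbs (fun k => (p k : ℂ) * N)]
    rw [if_neg (by omega : ¬ d = 0)]
    by_cases hle : d.natAbs ≤ n
    · rw [if_pos (by rw [Finset.mem_Icc]; omega), if_pos hle]; ring
    · rw [if_neg (by rw [Finset.mem_Icc]; omega), if_neg hle]; ring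

lemma quad (n m : ℕ) (hm : 0 < m) (p : ℕ → ℝ) (x : Fin m → ℝ) :
    ∑ l ∈ Finset.range (m+n), (trigPoly' n p (2*Real.pi*l/((m+n:ℕ):ℝ)) : ℂ) *
        ((∑ j, (x j : ℂ) * Ee (m+n) (j*l)) * (starRingEnd ℂ) (∑ j, (x j : ℂ) * Ee (m+n) (j*l)))
      = ((m+n : ℕ) : ℂ) * ∑ j, ∑ k, (x j : ℂ) * (x k : ℂ) *
          (if ((j:ℤ)-(k:ℤ)).natAbs ≤ n then (p ((((j:ℤ)-(k:ℤ)).natAbs)) : ℂ) else 0) := by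
  have hl : ∀ l ∈ Finset.range (m+n),
      (trigPoly' n p (2*Real.pi*l/((m+n:ℕ):ℝ)) : ℂ) *
        ((∑ j, (x j : ℂ) * Ee (m+n) (j*l)) * (starRingEnd ℂ) (∑ j, (x j : ℂ) * Ee (m+n) (j*l)))
      = ∑ j, ∑ k, (x j : ℂ) * (x k : ℂ) *
          ((trigPoly' n p (2*Real.pi*l/((m+n:ℕ):ℝ)) : ℂ) * Ee (m+n) (((j:ℤ)-(k:ℤ))*l)) := by
    intro l _
    have hconj : (starRingEnd ℂ) (∑ j, (x j : ℂ) * Ee (m+n) (j*l))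
        = ∑ k : Fin m, (x k : ℂ) * Ee (m+n) (-((k:ℤ)*l)) := by
      rw [map_sum]
      apply Finset.sum_congr rfl
      intro k _
      rw [_root_.map_mul, conj_Ee, Complex.conj_ofReal]
    rw [hconj, Finset.sum_mul_sum, Finset.mul_sum]
    apply Finset.sum_congr rfl
    intro j _
    rw [Finset.mul_sum]
    apply Finset.sum_congr rfl
    intro k _
    have : ((j:ℤ)-(k:ℤ))*l = (j:ℤ)*l + -((k:ℤ)*l) := by ring
    rw [this, Ee_add]
    ring
  rw [Finset.sum_congr rfl hl, Finset.sum_comm]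
  rw [Finset.mul_sum]
  apply Finset.sum_congr rfl
  intro j _
  rw [Finset.sum_comm, Finset.mul_sum]
  apply Finset.sum_congr rfl
  intro k _
  rw [← Finset.mul_sum, sum_p_Ee (m+n) n p ((j:ℤ)-(k:ℤ))
    (by have := j.isLt; have := k.isLt; omega)]
  ring

lemma quad_real (n m : ℕ) (hm : 0 < m) (p : ℕ → ℝ) (x : Fin m → ℝ) :
    ∑ l ∈ Finset.range (m+n), trigPoly' n p (2*Real.pi*l/((m+n:ℕ):ℝ)) *
        Complex.normSq (∑ j, (x j : ℂ) * Ee (m+n) (j*l))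
      = ((m+n : ℕ) : ℝ) * ∑ j, ∑ k, x j * x k *
          (if ((j:ℤ)-(k:ℤ)).natAbs ≤ n then p (((j:ℤ)-(k:ℤ)).natAbs) else 0) := by
  have key := quad n m hm p x
  apply Complex.ofReal_injective
  push_cast [apply_ite (fun r : ℝ => (r : ℂ))]
  push_cast [apply_ite (fun r : ℝ => (r : ℂ))] at key
  rw [← key]
  apply Finset.sum_congr rfl
  intro l _
  rw [Complex.mul_conj]

lemma parseval (n m : ℕ) (hm : 0 < m) (x : Fin m → ℝ) :
    ∑ l ∈ Finset.range (m+n), Complex.normSq (∑ j, (x j : ℂ) * Ee (m+n) (j*l))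
      = ((m+n:ℕ):ℝ) * ∑ j, (x j)^2 := by
  have htrig : ∀ θ : ℝ, trigPoly' n (fun k => if k = 0 then (1:ℝ) else 0) θ = 1 := by
    intro θ
    rw [trigPoly', if_pos rfl, Finset.sum_eq_zero, add_zero]
    intro k hk
    rw [Finset.mem_Icc] at hk
    rw [if_neg (by omega)]
    ring
  have key := quad_real n m hm (fun k => if k = 0 then (1:ℝ) else 0) x
  simp only [htrig, one_mul] at key
  rw [key]
  congr 1
  apply Finset.sum_congr rfl
  intro j _
  rw [Finset.sum_eq_single j]
  · simp [sub_self]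
    ring
  · intro k _ hkj
    have hne : (k:ℕ) ≠ (j:ℕ) := fun h => hkj (Fin.ext h)
    have h0 : ((j:ℤ)-(k:ℤ)).natAbs ≠ 0 := by omega
    by_cases hle : ((j:ℤ)-(k:ℤ)).natAbs ≤ n
    · rw [if_pos hle, if_neg h0]; ring
    · rw [if_neg hle]; ring
  · intro h
    exact absurd (Finset.mem_univ j) h

lemma toeplitz_lb (n m : ℕ) (hm : 0 < m) (p : ℕ → ℝ) (x : Fin m → ℝ) (c : ℝ)
    (hc : ∀ l ∈ Finset.range (m+n), c ≤ trigPoly' n p (2*Real.pi*l/((m+n:ℕ):ℝ))) :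
    c * ∑ j, (x j)^2 ≤ ∑ j, ∑ k, x j * x k *
        (if ((j:ℤ)-(k:ℤ)).natAbs ≤ n then p (((j:ℤ)-(k:ℤ)).natAbs) else 0) := by
  have hN : (0:ℝ) < ((m+n:ℕ):ℝ) := by
    have : 0 < m + n := by omega
    exact_mod_cast this
  have key := quad_real n m hm p x
  have hpar := parseval n m hm x
  have hstep : c * (((m+n:ℕ):ℝ) * ∑ j, (x j)^2)
      ≤ ((m+n:ℕ):ℝ) * ∑ j, ∑ k, x j * x k *
          (if ((j:ℤ)-(k:ℤ)).natAbs ≤ n then p (((j:ℤ)-(k:ℤ)).natAbs) else 0) := by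
    rw [← hpar, ← key, Finset.mul_sum]
    apply Finset.sum_le_sum
    intro l hl
    exact mul_le_mul_of_nonneg_right (hc l hl) (Complex.normSq_nonneg _)
  apply le_of_mul_le_mul_left _ hN
  calc ((m+n:ℕ):ℝ) * (c * ∑ j, (x j)^2) = c * (((m+n:ℕ):ℝ) * ∑ j, (x j)^2) := by ring
  _ ≤ _ := hstep

lemma band_card (n m : ℕ) (j : Fin m) (y : ℝ) (hy : 0 ≤ y) :
    ∑ k : Fin m, (if ((j:ℤ)-(k:ℤ)).natAbs ≤ n then y else 0) ≤ (2*(n:ℝ)+1) * y := by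
  rw [← Finset.sum_filter, Finset.sum_const, nsmul_eq_mul]
  have hcard : (Finset.univ.filter (fun k : Fin m => ((j:ℤ)-(k:ℤ)).natAbs ≤ n)).card
      ≤ 2*n+1 := by
    have h1 := Finset.card_le_card_of_injOn (fun k : Fin m => (k:ℕ))
      (s := Finset.univ.filter (fun k : Fin m => ((j:ℤ)-(k:ℤ)).natAbs ≤ n))
      (t := Finset.Icc ((j:ℕ) - n) ((j:ℕ) + n))
      (by
        intro k hk
        rw [Finset.mem_coe, Finset.mem_filter] at hk
        dsimp only
        rw [Finset.mem_coe, Finset.mem_Icc]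
        omega)
      (by
        intro a _ b _ h
        exact Fin.ext h)
    calc _ ≤ (Finset.Icc ((j:ℕ) - n) ((j:ℕ) + n)).card := h1
    _ = (j:ℕ) + n + 1 - ((j:ℕ) - n) := Nat.card_Icc _ _
    _ ≤ 2*n+1 := by omega
  apply mul_le_mul_of_nonneg_right _ hy
  calc ((Finset.univ.filter (fun k : Fin m => ((j:ℤ)-(k:ℤ)).natAbs ≤ n)).card : ℝ)
      ≤ ((2*n+1 : ℕ) : ℝ) := by exact_mod_cast hcard
  _ = 2*(n:ℝ)+1 := by push_cast; ring

lemma quad_err (n m : ℕ) (ε : ℝ) (hε : 0 ≤ ε) (e : Fin m → Fin m → ℝ)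
    (hband : ∀ j k : Fin m, ¬ ((j:ℤ)-(k:ℤ)).natAbs ≤ n → e j k = 0)
    (hsize : ∀ j k : Fin m, |e j k| ≤ ε) (x : Fin m → ℝ) :
    -((2*(n:ℝ)+1) * ε * ∑ j, (x j)^2) ≤ ∑ j, ∑ k, x j * x k * e j k := by
  have pt : ∀ j k : Fin m,
      -(if ((j:ℤ)-(k:ℤ)).natAbs ≤ n then ε/2*(x j)^2 + ε/2*(x k)^2 else 0)
        ≤ x j * x k * e j k := by
    intro j k
    by_cases hb : ((j:ℤ)-(k:ℤ)).natAbs ≤ n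
    · rw [if_pos hb]
      have h2 := two_mul_le_add_sq |x j| |x k|
      have habs : |x j * x k| ≤ ((x j)^2 + (x k)^2)/2 := by
        rw [abs_mul]
        rw [_root_.sq_abs, _root_.sq_abs] at h2
        linarith
      have h1 : |x j * x k * e j k| ≤ ε/2*(x j)^2 + ε/2*(x k)^2 := by
        calc |x j * x k * e j k| = |x j * x k| * |e j k| := abs_mul _ _
        _ ≤ ((x j)^2+(x k)^2)/2 * ε := by
            apply mul_le_mul habs (hsize j k) (abs_nonneg _) (by positivity)
        _ = ε/2*(x j)^2 + ε/2*(x k)^2 := by ring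
      linarith [neg_abs_le (x j * x k * e j k)]
    · rw [if_neg hb, hband j k hb, mul_zero, neg_zero]
  have hsum : ∑ j : Fin m, ∑ k : Fin m,
      -(if ((j:ℤ)-(k:ℤ)).natAbs ≤ n then ε/2*(x j)^2 + ε/2*(x k)^2 else 0)
        ≤ ∑ j, ∑ k, x j * x k * e j k :=
    Finset.sum_le_sum fun j _ => Finset.sum_le_sum fun k _ => pt j k
  refine le_trans ?_ hsum
  have hneg : ∑ j : Fin m, ∑ k : Fin m,
      -(if ((j:ℤ)-(k:ℤ)).natAbs ≤ n then ε/2*(x j)^2 + ε/2*(x k)^2 else 0)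
      = -∑ j : Fin m, ∑ k : Fin m,
          (if ((j:ℤ)-(k:ℤ)).natAbs ≤ n then ε/2*(x j)^2 + ε/2*(x k)^2 else 0) := by
    rw [← Finset.sum_neg_distrib]
    apply Finset.sum_congr rfl
    intro j _
    rw [← Finset.sum_neg_distrib]
  rw [hneg]
  apply neg_le_neg
  have hsplit : ∀ j k : Fin m,
      (if ((j:ℤ)-(k:ℤ)).natAbs ≤ n then ε/2*(x j)^2 + ε/2*(x k)^2 else 0)
      = (if ((j:ℤ)-(k:ℤ)).natAbs ≤ n then ε/2*(x j)^2 else 0)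
        + (if ((j:ℤ)-(k:ℤ)).natAbs ≤ n then ε/2*(x k)^2 else 0) := by
    intro j k
    by_cases hb : ((j:ℤ)-(k:ℤ)).natAbs ≤ n <;> simp [hb]
  have hS1 : ∑ j : Fin m, ∑ k : Fin m,
      (if ((j:ℤ)-(k:ℤ)).natAbs ≤ n then ε/2*(x j)^2 else 0)
      ≤ (2*(n:ℝ)+1) * (ε/2) * ∑ j, (x j)^2 := by
    calc ∑ j : Fin m, ∑ k : Fin m, (if ((j:ℤ)-(k:ℤ)).natAbs ≤ n then ε/2*(x j)^2 else 0)
        ≤ ∑ j : Fin m, (2*(n:ℝ)+1) * (ε/2*(x j)^2) :=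
          Finset.sum_le_sum fun j _ => band_card n m j _ (by positivity)
    _ = (2*(n:ℝ)+1) * (ε/2) * ∑ j, (x j)^2 := by
        rw [Finset.mul_sum]
        apply Finset.sum_congr rfl
        intro j _
        ring
  have hS2 : ∑ j : Fin m, ∑ k : Fin m,
      (if ((j:ℤ)-(k:ℤ)).natAbs ≤ n then ε/2*(x k)^2 else 0)
      ≤ (2*(n:ℝ)+1) * (ε/2) * ∑ j, (x j)^2 := by
    rw [Finset.sum_comm]
    have hrw : ∀ k j : Fin m,
        (if ((j:ℤ)-(k:ℤ)).natAbs ≤ n then ε/2*(x k)^2 else 0)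
        = (if ((k:ℤ)-(j:ℤ)).natAbs ≤ n then ε/2*(x k)^2 else 0) := by
      intro k j
      exact if_congr (by omega) rfl rfl
    calc ∑ k : Fin m, ∑ j : Fin m, (if ((j:ℤ)-(k:ℤ)).natAbs ≤ n then ε/2*(x k)^2 else 0)
        = ∑ k : Fin m, ∑ j : Fin m, (if ((k:ℤ)-(j:ℤ)).natAbs ≤ n then ε/2*(x k)^2 else 0) := by
          apply Finset.sum_congr rfl
          intro k _
          exact Finset.sum_congr rfl fun j _ => hrw k j
    _ ≤ ∑ k : Fin m, (2*(n:ℝ)+1) * (ε/2*(x k)^2) :=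
          Finset.sum_le_sum fun k _ => band_card n m k _ (by positivity)
    _ = (2*(n:ℝ)+1) * (ε/2) * ∑ j, (x j)^2 := by
        rw [Finset.mul_sum]
        apply Finset.sum_congr rfl
        intro j _
        ring
  calc ∑ j : Fin m, ∑ k : Fin m,
      (if ((j:ℤ)-(k:ℤ)).natAbs ≤ n then ε/2*(x j)^2 + ε/2*(x k)^2 else 0)
      = (∑ j : Fin m, ∑ k : Fin m, (if ((j:ℤ)-(k:ℤ)).natAbs ≤ n then ε/2*(x j)^2 else 0))
        + ∑ j : Fin m, ∑ k : Fin m, (if ((j:ℤ)-(k:ℤ)).natAbs ≤ n then ε/2*(x k)^2 else 0) := by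
        rw [← Finset.sum_add_distrib]
        apply Finset.sum_congr rfl
        intro j _
        rw [← Finset.sum_add_distrib]
        exact Finset.sum_congr rfl fun k _ => hsplit j k
  _ ≤ (2*(n:ℝ)+1) * ε * ∑ j, (x j)^2 := by linarith


/-- If `p` is strictly positive then `P_m` is positive definite for all large enough `m`. -/
theorem stmt5 (n : ℕ) (p : ℕ → ℝ) (hpos : ∀ θ : ℝ, 0 < trigPoly n p θ) :
    ∃ m₀ : ℕ, ∀ m : ℕ, m₀ ≤ m → (Pmat n m p).PosDef := by
  have hcont : Continuous (trigPoly' n p) := by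
    unfold trigPoly'
    apply Continuous.add continuous_const
    apply continuous_finset_sum
    intro k _
    exact continuous_const.mul (Real.continuous_cos.comp (continuous_const.mul continuous_id))
  have hne : (Set.Icc (0:ℝ) (2*Real.pi)).Nonempty :=
    ⟨0, Set.mem_Icc.mpr ⟨le_refl 0, by positivity⟩⟩
  obtain ⟨θ₀, hθmem, hθmin⟩ := isCompact_Icc.exists_isMinOn hne hcont.continuousOn
  set c := trigPoly' n p θ₀ with hcdef
  have hc : 0 < c := hpos θ₀
  set M := ∑ k ∈ Finset.range (n+1), |p k| with hMdef
  have hM0 : 0 ≤ M := Finset.sum_nonneg fun k _ => abs_nonneg _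
  have hpM : ∀ d : ℕ, d ≤ n → |p d| ≤ M := fun d hd =>
    Finset.single_le_sum (f := fun k => |p k|) (fun k _ => abs_nonneg _)
      (Finset.mem_range.mpr (by omega))
  set A := (2*(n:ℝ)+1) * ((n:ℝ) * M) with hAdef
  have hA0 : 0 ≤ A := by positivity
  refine ⟨n + 1 + ⌈A / c⌉₊, fun m hm => ?_⟩
  have hmn : n < m := by omega
  have hmn' : (0:ℝ) < (m:ℝ) - (n:ℝ) := by
    have : (n:ℝ) < m := by exact_mod_cast hmn
    linarith
  have hm0 : 0 < m := by omega
  rw [Matrix.posDef_iff_dotProduct_mulVec]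
  constructor
  · ext j k
    rw [Matrix.conjTranspose_apply]
    show star (Pmat n m p k j) = Pmat n m p j k
    rw [star_trivial]
    simp only [Pmat]
    have h1 : ((k:ℤ)-(j:ℤ)).natAbs = ((j:ℤ)-(k:ℤ)).natAbs := by omega
    rw [h1]
  · intro x hx
    have hstar : star x = x := by
      funext i
      exact star_trivial _
    have hquad : dotProduct x ((Pmat n m p) *ᵥ x)
        = ∑ j, ∑ k, x j * x k * Pmat n m p j k := by
      simp only [dotProduct, Matrix.mulVec]
      apply Finset.sum_congr rfl
      intro j _
      rw [Finset.mul_sum]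
      exact Finset.sum_congr rfl fun k _ => by ring
    set ε := (n:ℝ) * M / ((m:ℝ) - n) with hεdef
    have hε0 : 0 ≤ ε := by positivity
    have hPsplit : ∀ j k : Fin m, Pmat n m p j k
        = (if ((j:ℤ)-(k:ℤ)).natAbs ≤ n then p (((j:ℤ)-(k:ℤ)).natAbs) else 0)
          + (if ((j:ℤ)-(k:ℤ)).natAbs ≤ n
              then ((m:ℝ)/((m:ℝ)-((((j:ℤ)-(k:ℤ)).natAbs:ℕ):ℝ)) - 1) * p (((j:ℤ)-(k:ℤ)).natAbs)
              else 0) := by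
      intro j k
      simp only [Pmat]
      by_cases hb : ((j:ℤ)-(k:ℤ)).natAbs ≤ n
      · rw [if_pos hb, if_pos hb, if_pos hb]; ring
      · rw [if_neg hb, if_neg hb, if_neg hb]; ring
    have hQsplit : ∑ j, ∑ k, x j * x k * Pmat n m p j k
        = (∑ j, ∑ k, x j * x k *
            (if ((j:ℤ)-(k:ℤ)).natAbs ≤ n then p (((j:ℤ)-(k:ℤ)).natAbs) else 0))
          + ∑ j, ∑ k, x j * x k *
            (if ((j:ℤ)-(k:ℤ)).natAbs ≤ n
              then ((m:ℝ)/((m:ℝ)-((((j:ℤ)-(k:ℤ)).natAbs:ℕ):ℝ)) - 1) * p (((j:ℤ)-(k:ℤ)).natAbs)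
              else 0) := by
      rw [← Finset.sum_add_distrib]
      apply Finset.sum_congr rfl
      intro j _
      rw [← Finset.sum_add_distrib]
      apply Finset.sum_congr rfl
      intro k _
      rw [hPsplit j k]
      ring
    have hT := toeplitz_lb n m hm0 p x c (by
      intro l hl
      apply hθmin
      rw [Finset.mem_range] at hl
      have hNpos : (0:ℝ) < ((m+n:ℕ):ℝ) := by
        have : 0 < m + n := by omega
        exact_mod_cast this
      have hl' : (l:ℝ) ≤ ((m+n:ℕ):ℝ) := by exact_mod_cast hl.le
      constructor
      · positivity
      · rw [div_le_iff₀ hNpos]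
        nlinarith [Real.pi_pos])
    have hE := quad_err n m ε hε0
      (fun j k => if ((j:ℤ)-(k:ℤ)).natAbs ≤ n
          then ((m:ℝ)/((m:ℝ)-((((j:ℤ)-(k:ℤ)).natAbs:ℕ):ℝ)) - 1) * p (((j:ℤ)-(k:ℤ)).natAbs)
          else 0)
      (by intro j k hb; rw [if_neg hb])
      (by
        intro j k
        by_cases hb : ((j:ℤ)-(k:ℤ)).natAbs ≤ n
        · rw [if_pos hb]
          set d := ((j:ℤ)-(k:ℤ)).natAbs with hd
          have hdn : (d:ℝ) ≤ (n:ℝ) := by exact_mod_cast hb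
          have hmd : (0:ℝ) < (m:ℝ) - (d:ℝ) := by
            have : (d:ℝ) ≤ (n:ℝ) := hdn
            linarith
          have hrn : (m:ℝ)/((m:ℝ)-(d:ℝ)) - 1 = (d:ℝ)/((m:ℝ)-(d:ℝ)) := by
            field_simp
            ring
          rw [hrn, _root_.abs_mul]
          have h1 : |(d:ℝ)/((m:ℝ)-(d:ℝ))| = (d:ℝ)/((m:ℝ)-(d:ℝ)) := by
            rw [_root_.abs_of_nonneg]
            positivity
          rw [h1]
          have h2 : (d:ℝ)/((m:ℝ)-(d:ℝ)) ≤ (n:ℝ)/((m:ℝ)-(n:ℝ)) := by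
            apply div_le_div₀ (by positivity) hdn hmn'
            linarith
          calc (d:ℝ)/((m:ℝ)-(d:ℝ)) * |p d| ≤ (n:ℝ)/((m:ℝ)-(n:ℝ)) * M := by
                apply mul_le_mul h2 (hpM d hb) (abs_nonneg _)
                positivity
          _ = ε := by rw [hεdef]; ring
        · rw [if_neg hb, _root_.abs_zero]
          exact hε0)
      x
    have hceil : A / c ≤ (⌈A/c⌉₊ : ℝ) := Nat.le_ceil _
    have hmR : (n:ℝ) + 1 + (⌈A/c⌉₊:ℝ) ≤ (m:ℝ) := by exact_mod_cast hm
    have hsmall : (2*(n:ℝ)+1) * ε < c := by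
      have h1 : A / ((m:ℝ)-n) < c := by
        rw [div_lt_iff₀ hmn']
        have h3 : c * (1 + A/c) = c + A := by field_simp
        nlinarith
      calc (2*(n:ℝ)+1) * ε = A / ((m:ℝ)-n) := by rw [hεdef, hAdef]; ring
      _ < c := h1
    have hxpos : 0 < ∑ j, (x j)^2 := by
      obtain ⟨j, hj⟩ : ∃ j, x j ≠ 0 := by
        by_contra h
        push_neg at h
        exact hx (funext h)
      have h1 : (0:ℝ) < (x j)^2 := by positivity
      have h2 : (x j)^2 ≤ ∑ j, (x j)^2 :=
        Finset.single_le_sum (f := fun i => x i ^ 2) (fun i _ => sq_nonneg _) (Finset.mem_univ j)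
      linarith
    rw [hstar, hquad, hQsplit]
    have hprod : 0 < (c - (2*(n:ℝ)+1)*ε) * ∑ j, (x j)^2 :=
      mul_pos (by linarith) hxpos
    nlinarith [hT, hE, hprod]
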